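/- Abelian Livšic theorem for subshifts: let T_ψ : Σ_A × Γ → Σ_A × Γ be a transitive skew product over a transitive subshift of finite type, with ψ depending only on the zeroth coordinate. If f : Σ_A → ℝ is θ-Hölder and f^n(x) = 0 whenever σ^n x = x and ψ_n(x) = e_Γ, then there exist a Hölder continuous u : Σ_A → ℝ and a group homomorphism α : Γ → ℝ such that f(x) = u(σx) − u(x) + α(ψ(x)) for all x ∈ Σ_A. -/

import Mathlib

open Classical

/-- The two-sided subshift of finite type determined by a zero-one matrix `A`. -/
def SFT {k : ℕ} (A : Fin k → Fin k → Bool) : Type :=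
  {x : ℤ → Fin k // ∀ n : ℤ, A (x n) (x (n + 1)) = true}

/-- The shift map `(σx)_n = x_{n+1}`. -/
def shift {k : ℕ} {A : Fin k → Fin k → Bool} (x : SFT A) : SFT A :=
  ⟨fun n => x.1 (n + 1), fun n => x.2 (n + 1)⟩

/-- `N(x,y) = sup{n ≥ 0 : x_i = y_i for all |i| < n}`. -/
noncomputable def sep {k : ℕ} {A : Fin k → Fin k → Bool} (x y : SFT A) : ℕ :=
  sSup {n : ℕ | ∀ i : ℤ, |i| < (n : ℤ) → x.1 i = y.1 i}

/-- The metric `d(x,y) = 2^{-N(x,y)}`, with `d(x,x) = 0`. -/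
noncomputable def dSFT {k : ℕ} {A : Fin k → Fin k → Bool} (x y : SFT A) : ℝ :=
  if x = y then 0 else (2 : ℝ) ^ (-(sep x y : ℤ))

/-- The skew product `T_ψ(x,γ) = (σx, ψ(x)γ)`. -/
def skewProd {X Γ : Type*} [Group Γ] (σ : X → X) (ψ : X → Γ) : X × Γ → X × Γ :=
  fun p => (σ p.1, ψ p.1 * p.2)

/-- The cocycle `ψ_n(x) = ψ(σ^{n-1}x)···ψ(σx)ψ(x)`. -/
def coc {X M : Type*} [Monoid M] (σ : X → X) (ψ : X → M) : ℕ → X → M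
  | 0, _ => 1
  | n + 1, x => ψ (σ^[n] x) * coc σ ψ n x

/-- The metric on `Σ_A × Γ`. -/
noncomputable def dHat {k : ℕ} {A : Fin k → Fin k → Bool} {Γ : Type*}
    (p q : SFT A × Γ) : ℝ :=
  if p.2 = q.2 then dSFT p.1 q.1 else 1

namespace Liv
variable {k : ℕ} {A : Fin k → Fin k → Bool}

lemma shift_iter_coord (x : SFT A) (n : ℕ) (i : ℤ) : (shift^[n] x).1 i = x.1 (i + n) := by
  induction n generalizing i with
  | zero => simp
  | succ m ih =>
    rw [Function.iterate_succ_apply']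
    show (shift^[m] x).1 (i+1) = _
    rw [ih]
    push_cast
    ring_nf

lemma sft_ext {x y : SFT A} (h : ∀ i : ℤ, x.1 i = y.1 i) : x = y :=
  Subtype.ext (funext h)

lemma agree_zero (x y : SFT A) : (0:ℕ) ∈ {n : ℕ | ∀ i : ℤ, |i| < (n : ℤ) → x.1 i = y.1 i} := by
  intro i hi
  rw [Nat.cast_zero] at hi
  exact absurd hi (abs_nonneg i).not_gt

lemma agree_bdd {x y : SFT A} (h : x ≠ y) :
    BddAbove {n : ℕ | ∀ i : ℤ, |i| < (n : ℤ) → x.1 i = y.1 i} := by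
  have : ∃ i : ℤ, x.1 i ≠ y.1 i := by
    by_contra hc; push_neg at hc; exact h (sft_ext hc)
  obtain ⟨i, hi⟩ := this
  refine ⟨i.natAbs, fun n hn => ?_⟩
  by_contra hlt
  have habs : |i| < (n:ℤ) := by
    rw [Int.abs_eq_natAbs]
    exact_mod_cast Nat.lt_of_not_le hlt
  exact hi (hn i habs)

lemma sep_spec {x y : SFT A} (h : x ≠ y) : ∀ i : ℤ, |i| < (sep x y : ℤ) → x.1 i = y.1 i :=
  Nat.sSup_mem ⟨0, agree_zero x y⟩ (agree_bdd h)

lemma le_sep {x y : SFT A} (h : x ≠ y) {n : ℕ}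
    (hn : ∀ i : ℤ, |i| < (n : ℤ) → x.1 i = y.1 i) : n ≤ sep x y :=
  le_csSup (agree_bdd h) hn

lemma dSFT_nonneg (x y : SFT A) : 0 ≤ dSFT x y := by
  unfold dSFT; split
  · exact le_refl 0
  · positivity

lemma dSFT_le_of_agree {x y : SFT A} {n : ℕ}
    (h : ∀ i : ℤ, |i| < (n : ℤ) → x.1 i = y.1 i) : dSFT x y ≤ (2:ℝ) ^ (-(n:ℤ)) := by
  by_cases hxy : x = y
  · rw [dSFT, if_pos hxy]; positivity
  · rw [dSFT, if_neg hxy]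
    apply zpow_le_zpow_right₀ one_le_two
    have := le_sep hxy h
    omega

lemma agree_of_dSFT_lt {x y : SFT A} {n : ℕ}
    (h : dSFT x y < (2:ℝ) ^ (-(n:ℤ))) : ∀ i : ℤ, |i| < (n:ℤ) + 1 → x.1 i = y.1 i := by
  by_cases hxy : x = y
  · subst hxy; intro i _; rfl
  · have hs : (n:ℤ) < sep x y := by
      rw [dSFT, if_neg hxy] at h
      have := (zpow_lt_zpow_iff_right₀ (by norm_num : (1:ℝ) < 2)).mp h
      omega
    intro i hi; exact sep_spec hxy i (by omega)

variable {Γ : Type*} [Group Γ]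

lemma coc_congr (ψ : SFT A → Γ) (hψ : ∀ x y : SFT A, x.1 0 = y.1 0 → ψ x = ψ y)
    {x y : SFT A} {n : ℕ} (h : ∀ j : ℕ, j < n → x.1 j = y.1 j) :
    coc shift ψ n x = coc shift ψ n y := by
  induction n with
  | zero => rfl
  | succ m ih =>
    show ψ (shift^[m] x) * _ = ψ (shift^[m] y) * _
    rw [ih (fun j hj => h j (by omega)), hψ (shift^[m] x) (shift^[m] y)
      (by rw [shift_iter_coord, shift_iter_coord]; simpa using h m (by omega))]

lemma coc_add (ψ : SFT A → Γ) (a b : ℕ) (x : SFT A) :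
    coc shift ψ (a + b) x = coc shift ψ a (shift^[b] x) * coc shift ψ b x := by
  induction a with
  | zero => simp [coc]
  | succ m ih =>
    rw [show m + 1 + b = (m + b) + 1 from by ring]
    show ψ (shift^[m + b] x) * coc shift ψ (m + b) x = _
    rw [ih]
    show _ = ψ (shift^[m] (shift^[b] x)) * coc shift ψ m (shift^[b] x) * coc shift ψ b x
    rw [← Function.iterate_add_apply, mul_assoc]

lemma skewProd_iter (ψ : SFT A → Γ) (z : SFT A × Γ) (n : ℕ) :
    (skewProd shift ψ)^[n] z = (shift^[n] z.1, coc shift ψ n z.1 * z.2) := by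
  induction n with
  | zero => simp [coc]
  | succ m ih =>
    rw [Function.iterate_succ_apply', ih]
    show (shift (shift^[m] z.1), ψ (shift^[m] z.1) * (coc shift ψ m z.1 * z.2)) = _
    rw [← Function.iterate_succ_apply' shift m z.1]
    show _ = (shift^[m+1] z.1, ψ (shift^[m] z.1) * coc shift ψ m z.1 * z.2)
    rw [mul_assoc]

lemma mod_agree (x' : SFT A) (p N : ℕ) (hp : 1 ≤ p) (hN : 1 ≤ N)
    (hag : ∀ i : ℤ, |i| < (N:ℤ) → x'.1 i = x'.1 (i + p)) :
    ∀ l : ℤ, -(N:ℤ) < l → l < (p:ℤ) + N → x'.1 (l % p) = x'.1 l := by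
  have up : ∀ t : ℕ, ∀ l : ℤ, 0 ≤ l → l < (p:ℤ) + N → l.toNat = t → x'.1 (l % p) = x'.1 l := by
    intro t
    induction t using Nat.strong_induction_on with
    | _ t ih =>
      intro l hl0 hlu hlt
      by_cases hcase : l < (p:ℤ)
      · rw [Int.emod_eq_of_lt hl0 hcase]
      · have h1 : x'.1 (l - p) = x'.1 l := by
          have := hag (l - p) (by rw [abs_of_nonneg (by omega)]; omega)
          have he : l - (p:ℤ) + p = l := by ring
          rw [he] at this; exact this
        have h2 : (l - (p:ℤ)) % p = l % p := by
          have := Int.add_mul_emod_self_left (a := l) (b := (p:ℤ)) (c := -1)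
          rw [mul_neg_one] at this
          rw [show l - (p:ℤ) = l + -(p:ℤ) from by ring]; exact this
        rw [← h2, ih (l - p).toNat (by omega) (l - p) (by omega) (by omega) rfl, h1]
  have down : ∀ t : ℕ, ∀ l : ℤ, l < 0 → -(N:ℤ) < l → (-l).toNat = t → x'.1 (l % p) = x'.1 l := by
    intro t
    induction t using Nat.strong_induction_on with
    | _ t ih =>
      intro l hl0 hlN hlt
      have h1 : x'.1 l = x'.1 (l + p) := hag l (by rw [abs_of_neg hl0]; omega)
      have h2 : (l + (p:ℤ)) % p = l % p := by
        have := Int.add_mul_emod_self_left (a := l) (b := (p:ℤ)) (c := 1)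
        rw [mul_one] at this; exact this
      by_cases hcase : l + (p:ℤ) < 0
      · rw [← h2, ih (-(l+p)).toNat (by omega) (l+p) hcase (by omega) rfl, h1]
      · rw [← h2, Int.emod_eq_of_lt (by omega) (by omega), h1]
  intro l h1 h2
  rcases le_or_gt 0 l with h | h
  · exact up l.toNat l h h2 rfl
  · exact down (-l).toNat l h h1 rfl

lemma zpow_theta (θ : ℝ) (M : ℕ) : ((2:ℝ) ^ (-(M:ℤ))) ^ θ = ((2:ℝ) ^ (-θ)) ^ M := by
  rw [← Real.rpow_intCast 2 (-(M:ℤ)), ← Real.rpow_natCast ((2:ℝ) ^ (-θ)) M,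
    ← Real.rpow_mul (by norm_num : (0:ℝ) ≤ 2), ← Real.rpow_mul (by norm_num : (0:ℝ) ≤ 2)]
  push_cast
  ring_nf

lemma rpow_bound {θ : ℝ} (hθ : 0 < θ) {x y : SFT A} {M : ℕ}
    (h : dSFT x y ≤ (2:ℝ) ^ (-(M:ℤ))) :
    dSFT x y ^ θ ≤ ((2:ℝ) ^ (-θ)) ^ M := by
  have h1 : dSFT x y ^ θ ≤ ((2:ℝ) ^ (-(M:ℤ))) ^ θ :=
    Real.rpow_le_rpow (dSFT_nonneg x y) h hθ.le
  have h2 := zpow_theta θ M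
  rw [h2] at h1; exact h1

lemma key_estimate (ψ : SFT A → Γ) (hψ : ∀ x y : SFT A, x.1 0 = y.1 0 → ψ x = ψ y)
    (θ C : ℝ) (hθ : 0 < θ) (hC : 0 ≤ C) (f : SFT A → ℝ)
    (hf : ∀ x y : SFT A, |f x - f y| ≤ C * dSFT x y ^ θ)
    (hvanish : ∀ n : ℕ, 1 ≤ n → ∀ x : SFT A,
      shift^[n] x = x → coc shift ψ n x = 1 →
        ∑ i ∈ Finset.range n, f (shift^[i] x) = 0)
    (x' : SFT A) (p N : ℕ) (hp : 1 ≤ p) (hN : 1 ≤ N)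
    (hag : ∀ i : ℤ, |i| < (N:ℤ) → x'.1 i = x'.1 (i + p))
    (hcoc : coc shift ψ p x' = 1) :
    |∑ j ∈ Finset.range p, f (shift^[j] x')| ≤
      (2 * C / (1 - (2:ℝ) ^ (-θ))) * ((2:ℝ) ^ (-θ)) ^ N := by
  set r : ℝ := (2:ℝ) ^ (-θ) with hr
  have hr0 : 0 < r := Real.rpow_pos_of_pos (by norm_num) _
  have hr1 : r < 1 := Real.rpow_lt_one_of_one_lt_of_neg (by norm_num) (by linarith)
  have hp0 : (0:ℤ) < (p:ℤ) := by exact_mod_cast hp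
  -- the periodic point y
  have hadm : ∀ j : ℤ, A (x'.1 (j % p)) (x'.1 ((j+1) % p)) = true := by
    intro j
    set m := j % (p:ℤ) with hm
    have hm0 : 0 ≤ m := Int.emod_nonneg j (by omega)
    have hmp : m < p := Int.emod_lt_of_pos j hp0
    have hstep : (j + 1) % (p:ℤ) = (m + 1) % p := by
      have hd : j + 1 = (m + 1) + (p:ℤ) * (j / p) := by
        rw [hm, Int.emod_def]; ring
      rw [hd, Int.add_mul_emod_self_left]
    rw [hstep]
    by_cases hcase : m + 1 < (p:ℤ)
    · rw [Int.emod_eq_of_lt (by omega) hcase]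
      exact x'.2 m
    · have hmeq : m + 1 = (p:ℤ) := by omega
      rw [hmeq, Int.emod_self]
      have h0 : x'.1 0 = x'.1 (m + 1) := by
        have := hag 0 (by simpa using (show 0 < N by omega))
        rw [zero_add] at this; rw [hmeq]; exact this
      rw [h0]
      exact x'.2 m
  set y : SFT A := ⟨fun j => x'.1 (j % p), hadm⟩ with hy
  have hmod := mod_agree x' p N hp hN hag
  have hyc : ∀ l : ℤ, y.1 l = x'.1 (l % p) := fun l => rfl
  -- periodicity
  have hper : shift^[p] y = y := by
    apply sft_ext
    intro i
    rw [shift_iter_coord]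
    show x'.1 ((i + (p:ℤ)) % p) = x'.1 (i % p)
    have h2 : (i + (p:ℤ)) % p = i % p := by
      have := Int.add_mul_emod_self_left (a := i) (b := (p:ℤ)) (c := 1)
      rw [mul_one] at this; exact this
    exact congrArg x'.1 h2
  -- trivial cocycle
  have hcocy : coc shift ψ p y = 1 := by
    rw [coc_congr ψ hψ (x := y) (y := x') (n := p) ?_]
    · exact hcoc
    · intro j hj
      rw [hyc, Int.emod_eq_of_lt (by omega) (by exact_mod_cast hj)]
  have hzero : ∑ j ∈ Finset.range p, f (shift^[j] y) = 0 := hvanish p hp y hper hcocy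
  -- per-term distance bound
  have hterm : ∀ j ∈ Finset.range p,
      |f (shift^[j] x') - f (shift^[j] y)| ≤ C * r ^ N * (r ^ j + r ^ (p - 1 - j)) := by
    intro j hj
    rw [Finset.mem_range] at hj
    have hagree : ∀ i : ℤ, |i| < ((N + min j (p - 1 - j) : ℕ) : ℤ) →
        (shift^[j] x').1 i = (shift^[j] y).1 i := by
      intro i hi
      have hm1 : min j (p - 1 - j) ≤ j := min_le_left _ _
      have hm2 : min j (p - 1 - j) ≤ p - 1 - j := min_le_right _ _
      have habs := abs_lt.mp hi
      have h1 : ((N + min j (p - 1 - j) : ℕ) : ℤ) ≤ ((N + j : ℕ) : ℤ) := by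
        exact_mod_cast Nat.add_le_add_left hm1 N
      have h2 : ((N + min j (p - 1 - j) : ℕ) : ℤ) ≤ ((N + (p - 1 - j) : ℕ) : ℤ) := by
        exact_mod_cast Nat.add_le_add_left hm2 N
      rw [shift_iter_coord, shift_iter_coord, hyc]
      exact (hmod (i + j) (by omega) (by omega)).symm
    have hd : dSFT (shift^[j] x') (shift^[j] y) ≤ (2:ℝ) ^ (-((N + min j (p-1-j) : ℕ) : ℤ)) :=
      dSFT_le_of_agree hagree
    have hb := rpow_bound hθ hd
    have hsplit : r ^ (N + min j (p-1-j)) ≤ r ^ N * (r ^ j + r ^ (p - 1 - j)) := by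
      rw [pow_add]
      apply mul_le_mul_of_nonneg_left _ (pow_nonneg hr0.le N)
      rcases le_total j (p - 1 - j) with h | h
      · rw [min_eq_left h]
        have : 0 ≤ r ^ (p - 1 - j) := pow_nonneg hr0.le _
        linarith
      · rw [min_eq_right h]
        have : 0 ≤ r ^ j := pow_nonneg hr0.le _
        linarith
    calc |f (shift^[j] x') - f (shift^[j] y)|
        ≤ C * dSFT (shift^[j] x') (shift^[j] y) ^ θ := hf _ _
      _ ≤ C * (r ^ N * (r ^ j + r ^ (p - 1 - j))) :=
          mul_le_mul_of_nonneg_left (le_trans hb hsplit) hC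
      _ = C * r ^ N * (r ^ j + r ^ (p - 1 - j)) := by ring
  -- geometric sum bound
  have hgeom : ∑ j ∈ Finset.range p, r ^ j ≤ 1 / (1 - r) := by
    rw [geom_sum_eq hr1.ne]
    have hden : (0:ℝ) < 1 - r := by linarith
    have h1 : (r ^ p - 1) / (r - 1) = (1 - r ^ p) / (1 - r) := by
      rw [← neg_div_neg_eq]; ring_nf
    rw [h1, div_le_div_iff₀ hden hden]
    have : 0 ≤ r ^ p := pow_nonneg hr0.le p
    nlinarith
  have hgeom2 : ∑ j ∈ Finset.range p, r ^ (p - 1 - j) ≤ 1 / (1 - r) := by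
    rw [Finset.sum_range_reflect (fun j => r ^ j) p]
    exact hgeom
  calc |∑ j ∈ Finset.range p, f (shift^[j] x')|
      = |∑ j ∈ Finset.range p, (f (shift^[j] x') - f (shift^[j] y))| := by
        rw [Finset.sum_sub_distrib, hzero, sub_zero]
    _ ≤ ∑ j ∈ Finset.range p, |f (shift^[j] x') - f (shift^[j] y)| :=
        Finset.abs_sum_le_sum_abs _ _
    _ ≤ ∑ j ∈ Finset.range p, C * r ^ N * (r ^ j + r ^ (p - 1 - j)) :=
        Finset.sum_le_sum hterm
    _ = C * r ^ N * ∑ j ∈ Finset.range p, (r ^ j + r ^ (p - 1 - j)) := by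
        rw [Finset.mul_sum]
    _ ≤ C * r ^ N * (1 / (1 - r) + 1 / (1 - r)) := by
        apply mul_le_mul_of_nonneg_left _ (by positivity)
        rw [Finset.sum_add_distrib]
        exact add_le_add hgeom hgeom2
    _ = 2 * C / (1 - r) * r ^ N := by
        rw [← add_div]
        ring

end Liv

open Liv Filter

/-- abelian Livšic theorem for subshifts: if the skew product
`T_ψ` over a transitive subshift of finite type is transitive and the θ-Hölder
function `f` has vanishing Birkhoff sums over all periodic points with trivial
`ψ`-cocycle, then `f(x) = u(σx) − u(x) + α(ψ(x))` for some Hölder continuous `u`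
and some homomorphism `α : Γ → ℝ`. -/
theorem abelian_livsic_subshift {k : ℕ} (A : Fin k → Fin k → Bool)
    (hirr : ∀ i j : Fin k, ∃ n : ℕ, 1 ≤ n ∧ ∃ c : ℕ → Fin k,
      c 0 = i ∧ c n = j ∧ ∀ l < n, A (c l) (c (l + 1)) = true)
    (Γ : Type*) [Group Γ] [Countable Γ]
    (ψ : SFT A → Γ) (hψ : ∀ x y : SFT A, x.1 0 = y.1 0 → ψ x = ψ y)
    (z : SFT A × Γ)
    (htrans : ∀ p : SFT A × Γ, ∀ ε > 0, ∃ n : ℕ,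
      dHat ((skewProd shift ψ)^[n] z) p < ε)
    (θ C : ℝ) (hθ : 0 < θ) (hθ1 : θ ≤ 1) (hC : 0 ≤ C)
    (f : SFT A → ℝ)
    (hf : ∀ x y : SFT A, |f x - f y| ≤ C * dSFT x y ^ θ)
    (hvanish : ∀ n : ℕ, 1 ≤ n → ∀ x : SFT A,
      shift^[n] x = x → coc shift ψ n x = 1 →
        ∑ i ∈ Finset.range n, f (shift^[i] x) = 0) :
    ∃ (u : SFT A → ℝ) (α : Γ → ℝ),
      (∃ C' θ' : ℝ, 0 ≤ C' ∧ 0 < θ' ∧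
        ∀ x y : SFT A, |u x - u y| ≤ C' * dSFT x y ^ θ') ∧
      (α 1 = 0 ∧ ∀ a b : Γ, α (a * b) = α a + α b) ∧
      ∀ x : SFT A, f x = u (shift x) - u x + α (ψ x) := by
  classical
  set x₀ : SFT A := z.1 with hx₀
  set γ₀ : Γ := z.2 with hγ₀
  set r : ℝ := (2:ℝ) ^ (-θ) with hrdef
  have hr0 : 0 < r := Real.rpow_pos_of_pos (by norm_num) _
  have hr1 : r < 1 := Real.rpow_lt_one_of_one_lt_of_neg (by norm_num) (by linarith)
  set K : ℝ := 2 * C / (1 - r) with hKdef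
  have hK0 : 0 ≤ K := by
    apply div_nonneg (by linarith) (by linarith)
  set S : ℕ → ℝ := fun n => ∑ i ∈ Finset.range n, f (shift^[i] x₀) with hSdef
  -- convergence of tails
  have htend : ∀ (c : ℝ) (a : ℕ),
      Tendsto (fun j : ℕ => c * r ^ (j + a)) atTop (nhds 0) := by
    intro c a
    have h := tendsto_pow_atTop_nhds_zero_of_lt_one hr0.le hr1
    have h2 := h.comp (tendsto_add_atTop_nat a)
    have h3 := h2.const_mul c
    simpa using h3
  -- selection of approximating orbit times
  have hsel : ∀ q : SFT A × Γ, ∀ j : ℕ, ∃ n : ℕ,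
      dHat ((skewProd shift ψ)^[n] z) q < (2:ℝ) ^ (-((j:ℤ)+1)) :=
    fun q j => htrans q _ (by positivity)
  choose nq hnq using hsel
  have hfacts : ∀ (q : SFT A × Γ) (j : ℕ),
      coc shift ψ (nq q j) x₀ * γ₀ = q.2 ∧
      (∀ i : ℤ, |i| < (j:ℤ) + 2 → (shift^[nq q j] x₀).1 i = q.1.1 i) ∧
      dSFT (shift^[nq q j] x₀) q.1 < (2:ℝ) ^ (-((j:ℤ)+1)) := by
    intro q j
    have h := hnq q j
    rw [skewProd_iter] at h
    rw [dHat] at h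
    have hle1 : (2:ℝ) ^ (-((j:ℤ)+1)) ≤ 1 := by
      apply zpow_le_one_of_nonpos₀ (by norm_num : (1:ℝ) ≤ 2) (by omega)
    by_cases hg : coc shift ψ (nq q j) x₀ * γ₀ = q.2
    · rw [if_pos hg] at h
      refine ⟨hg, ?_, h⟩
      have h' : dSFT (shift^[nq q j] x₀) q.1 < (2:ℝ) ^ (-(((j+1:ℕ)):ℤ)) := by
        rw [show (-(((j+1:ℕ)):ℤ)) = -((j:ℤ)+1) from by push_cast; ring]
        exact h
      have := agree_of_dSFT_lt h'
      intro i hi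
      exact this i (by push_cast at hi ⊢; omega)
    · rw [if_neg hg] at h
      exact absurd (lt_of_lt_of_le h hle1) (lt_irrefl 1)
  -- the orbit-comparison estimate
  have horb : ∀ m n N : ℕ, 1 ≤ N →
      (∀ i : ℤ, |i| < (N:ℤ) → (shift^[m] x₀).1 i = (shift^[n] x₀).1 i) →
      coc shift ψ m x₀ * γ₀ = coc shift ψ n x₀ * γ₀ →
      |S n - S m| ≤ K * r ^ N := by
    have core : ∀ m n N : ℕ, m ≤ n → 1 ≤ N →
        (∀ i : ℤ, |i| < (N:ℤ) → (shift^[m] x₀).1 i = (shift^[n] x₀).1 i) →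
        coc shift ψ m x₀ * γ₀ = coc shift ψ n x₀ * γ₀ →
        |S n - S m| ≤ K * r ^ N := by
      intro m n N hmn hN hag hg
      rcases eq_or_lt_of_le hmn with heq | hlt
      · subst heq; simp only [sub_self, abs_zero]; positivity
      · set p : ℕ := n - m with hpdef
        have hp1 : 1 ≤ p := by omega
        have hnm : n = m + p := by omega
        have hcocmn : coc shift ψ m x₀ = coc shift ψ n x₀ := mul_right_cancel hg
        set x' : SFT A := shift^[m] x₀ with hx'
        have hagp : ∀ i : ℤ, |i| < (N:ℤ) → x'.1 i = x'.1 (i + p) := by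
          intro i hi
          have h1 := hag i hi
          rw [shift_iter_coord, shift_iter_coord] at h1
          rw [shift_iter_coord, shift_iter_coord]
          rw [h1]
          congr 1
          rw [hnm]; push_cast; ring
        have hcocp : coc shift ψ p x' = 1 := by
          have h1 : coc shift ψ (p + m) x₀ = coc shift ψ p x' * coc shift ψ m x₀ :=
            coc_add ψ p m x₀
          rw [show p + m = n from by omega, ← hcocmn] at h1
          exact mul_right_cancel (b := coc shift ψ m x₀)
            (by rw [one_mul]; exact h1.symm)
        have hkey := key_estimate ψ hψ θ C hθ hC f hf hvanish x' p N hp1 hN hagp hcocp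
        have hsum : S n - S m = ∑ j ∈ Finset.range p, f (shift^[j] x') := by
          have h1 := Finset.sum_range_add_sum_Ico (fun i => f (shift^[i] x₀)) hmn
          have h2 : ∑ i ∈ Finset.Ico m n, f (shift^[i] x₀)
              = ∑ j ∈ Finset.range (n - m), f (shift^[m + j] x₀) :=
            Finset.sum_Ico_eq_sum_range _ m n
          have h3 : ∀ j, f (shift^[m + j] x₀) = f (shift^[j] x') := by
            intro j
            rw [add_comm m j, Function.iterate_add_apply, ← hx']
          show (∑ i ∈ Finset.range n, f (shift^[i] x₀))
            - (∑ i ∈ Finset.range m, f (shift^[i] x₀)) = _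
          rw [← h1, h2, Finset.sum_congr rfl (fun j _ => h3 j), ← hpdef]
          ring
        rw [hsum]
        exact hkey
    intro m n N hN hag hg
    rcases le_total m n with h | h
    · exact core m n N h hN hag hg
    · rw [abs_sub_comm]
      exact core n m N h hN (fun i hi => (hag i hi).symm) hg.symm
  -- definition of V by completeness
  have hcauchy : ∀ q : SFT A × Γ, ∃ L : ℝ,
      Tendsto (fun j => S (nq q j)) atTop (nhds L) := by
    intro q
    apply cauchySeq_tendsto_of_complete
    apply cauchySeq_of_le_tendsto_0 (fun N => K * r ^ (N + 1))
    · intro a b Nb hNa hNb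
      rw [Real.dist_eq]
      apply horb (nq q b) (nq q a) (Nb + 1) (by omega)
      · intro i hi
        have ha := (hfacts q a).2.1 i (by push_cast at hi ⊢; omega)
        have hb := (hfacts q b).2.1 i (by push_cast at hi ⊢; omega)
        rw [ha, hb]
      · rw [(hfacts q b).1, (hfacts q a).1]
    · exact htend K 1
  choose V hV using hcauchy
  -- approximation property
  have happrox : ∀ (q : SFT A × Γ) (m M : ℕ), 1 ≤ M →
      coc shift ψ m x₀ * γ₀ = q.2 →
      (∀ i : ℤ, |i| < (M:ℤ) → (shift^[m] x₀).1 i = q.1.1 i) →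
      |V q - S m| ≤ K * r ^ M := by
    intro q m M hM hg hagq
    have hev : ∀ᶠ j in atTop, |S (nq q j) - S m| ≤ K * r ^ M := by
      filter_upwards [eventually_ge_atTop M] with j hj
      apply horb m (nq q j) M hM
      · intro i hi
        have h1 := hagq i hi
        have h2 := (hfacts q j).2.1 i (by push_cast at hi ⊢; omega)
        rw [h1, h2]
      · rw [hg, (hfacts q j).1]
    have hlim : Tendsto (fun j => |S (nq q j) - S m|) atTop (nhds |V q - S m|) :=
      ((hV q).sub_const (S m)).abs
    exact le_of_tendsto hlim hev
  -- Hölder-type continuity of V on fibers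
  have hP1 : ∀ (q q' : SFT A × Γ) (M : ℕ), 1 ≤ M → q.2 = q'.2 →
      (∀ i : ℤ, |i| < (M:ℤ) → q.1.1 i = q'.1.1 i) →
      |V q - V q'| ≤ 2 * K * r ^ M := by
    intro q q' M hM hg hagq
    have h1 : |V q - S (nq q M)| ≤ K * r ^ (M + 2) := by
      apply happrox q (nq q M) (M + 2) (by omega) (hfacts q M).1
      intro i hi
      exact (hfacts q M).2.1 i (by push_cast at hi ⊢; omega)
    have h2 : |V q' - S (nq q M)| ≤ K * r ^ M := by
      apply happrox q' (nq q M) M hM (by rw [(hfacts q M).1, hg])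
      intro i hi
      rw [(hfacts q M).2.1 i (by push_cast at hi ⊢; omega)]
      exact hagq i hi
    have h3 : r ^ (M + 2) ≤ r ^ M :=
      pow_le_pow_of_le_one hr0.le hr1.le (by omega)
    calc |V q - V q'| ≤ |V q - S (nq q M)| + |S (nq q M) - V q'| :=
          abs_sub_le _ _ _
      _ = |V q - S (nq q M)| + |V q' - S (nq q M)| := by rw [abs_sub_comm (S (nq q M))]
      _ ≤ K * r ^ (M + 2) + K * r ^ M := add_le_add h1 h2
      _ ≤ 2 * K * r ^ M := by nlinarith
  -- the cocycle equation for V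
  have hP2 : ∀ (x : SFT A) (γ : Γ), V (shift x, ψ x * γ) - V (x, γ) = f x := by
    intro x γ
    have key : ∀ j : ℕ,
        |V (shift x, ψ x * γ) - V (x, γ) - f x| ≤ (2 * K + C) * r ^ (j + 1) := by
      intro j
      set n := nq (x, γ) j with hn
      have hfa := hfacts (x, γ) j
      have hag0 : (shift^[n] x₀).1 0 = x.1 0 := hfa.2.1 0 (by rw [abs_zero]; positivity)
      have hψn : ψ (shift^[n] x₀) = ψ x := hψ _ _ hag0
      have e1 : |V (x, γ) - S n| ≤ K * r ^ (j + 2) := by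
        apply happrox (x, γ) n (j + 2) (by omega) hfa.1
        intro i hi
        exact hfa.2.1 i (by push_cast at hi ⊢; omega)
      have e2 : |V (shift x, ψ x * γ) - S (n + 1)| ≤ K * r ^ (j + 1) := by
        apply happrox (shift x, ψ x * γ) (n + 1) (j + 1) (by omega)
        · show coc shift ψ (n + 1) x₀ * γ₀ = ψ x * γ
          show ψ (shift^[n] x₀) * coc shift ψ n x₀ * γ₀ = ψ x * γ
          rw [mul_assoc, hfa.1, hψn]
        · intro i hi
          rw [shift_iter_coord]
          show x₀.1 (i + ((n+1:ℕ):ℤ)) = x.1 (i + 1)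
          have habs := abs_lt.mp hi
          have h5 := hfa.2.1 (i + 1) (by push_cast at habs ⊢; rw [abs_lt]; omega)
          rw [shift_iter_coord] at h5
          show x₀.1 (i + ((n+1:ℕ):ℤ)) = x.1 (i+1)
          rw [show i + ((n+1:ℕ):ℤ) = i + 1 + n from by push_cast; ring]
          exact h5
      have e3 : |f (shift^[n] x₀) - f x| ≤ C * r ^ (j + 1) := by
        have hd : dSFT (shift^[n] x₀) x ≤ (2:ℝ) ^ (-(((j+1:ℕ)):ℤ)) := by
          rw [show (-(((j+1:ℕ)):ℤ)) = -((j:ℤ)+1) from by push_cast; ring]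
          exact le_of_lt hfa.2.2
        have hb := rpow_bound hθ hd
        calc |f (shift^[n] x₀) - f x| ≤ C * dSFT (shift^[n] x₀) x ^ θ := hf _ _
          _ ≤ C * r ^ (j + 1) := mul_le_mul_of_nonneg_left hb hC
      have hS : S (n + 1) = S n + f (shift^[n] x₀) := Finset.sum_range_succ _ n
      have habs : |V (shift x, ψ x * γ) - V (x, γ) - f x|
          ≤ |V (shift x, ψ x * γ) - S (n+1)| + |V (x, γ) - S n| + |f (shift^[n] x₀) - f x| := by
        have : V (shift x, ψ x * γ) - V (x, γ) - f x
            = (V (shift x, ψ x * γ) - S (n+1)) - (V (x, γ) - S n)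
              + (f (shift^[n] x₀) - f x) := by rw [hS]; ring
        rw [this]
        calc |_ - _ + _| ≤ |(V (shift x, ψ x * γ) - S (n+1)) - (V (x, γ) - S n)|
              + |f (shift^[n] x₀) - f x| := abs_add_le _ _
          _ ≤ _ := by
              have := abs_sub (V (shift x, ψ x * γ) - S (n+1)) (V (x, γ) - S n)
              linarith
      have h6 : r ^ (j + 2) ≤ r ^ (j + 1) :=
        pow_le_pow_of_le_one hr0.le hr1.le (by omega)
      calc |V (shift x, ψ x * γ) - V (x, γ) - f x|
          ≤ K * r ^ (j+1) + K * r ^ (j+2) + C * r ^ (j+1) := by linarith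
        _ ≤ (2 * K + C) * r ^ (j + 1) := by nlinarith
    have h0 : |V (shift x, ψ x * γ) - V (x, γ) - f x| ≤ 0 :=
      ge_of_tendsto (htend (2*K+C) 1) (Eventually.of_forall key)
    have := abs_nonneg (V (shift x, ψ x * γ) - V (x, γ) - f x)
    have heq : V (shift x, ψ x * γ) - V (x, γ) - f x = 0 := by
      rw [← abs_eq_zero]; linarith
    linarith

  -- invariance of the translation defect
  have hW : ∀ (δ : Γ) (x : SFT A) (γ : Γ),
      V (shift x, (ψ x * γ) * δ) - V (shift x, ψ x * γ) = V (x, γ * δ) - V (x, γ) := by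
    intro δ x γ
    have h1 := hP2 x γ
    have h2 := hP2 x (γ * δ)
    rw [← mul_assoc] at h2
    linarith
  have hWn : ∀ (δ : Γ) (n : ℕ),
      V (shift^[n] x₀, (coc shift ψ n x₀ * γ₀) * δ)
        - V (shift^[n] x₀, coc shift ψ n x₀ * γ₀)
        = V (x₀, γ₀ * δ) - V (x₀, γ₀) := by
    intro δ n
    induction n with
    | zero =>
      show V (x₀, (1 * γ₀) * δ) - V (x₀, 1 * γ₀) = _
      rw [one_mul]
    | succ m ih =>
      have h1 := hW δ (shift^[m] x₀) (coc shift ψ m x₀ * γ₀)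
      rw [Function.iterate_succ_apply']
      have hc : coc shift ψ (m+1) x₀ * γ₀
          = ψ (shift^[m] x₀) * (coc shift ψ m x₀ * γ₀) := by
        show ψ (shift^[m] x₀) * coc shift ψ m x₀ * γ₀ = _
        rw [mul_assoc]
      rw [hc, h1, ih]
  -- constancy of the translation defect
  have hconst : ∀ (δ : Γ) (x : SFT A) (γ : Γ),
      V (x, γ * δ) - V (x, γ) = V (x₀, γ₀ * δ) - V (x₀, γ₀) := by
    intro δ x γ
    have key : ∀ j : ℕ,
        |V (x, γ * δ) - V (x, γ) - (V (x₀, γ₀ * δ) - V (x₀, γ₀))| ≤ 4 * K * r ^ (j+2) := by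
      intro j
      set n := nq (x, γ) j with hn
      have hfa := hfacts (x, γ) j
      have hg2 : coc shift ψ n x₀ * γ₀ = γ := hfa.1
      have hw := hWn δ n
      have a1 : |V (x, γ * δ) - V (shift^[n] x₀, (coc shift ψ n x₀ * γ₀) * δ)|
          ≤ 2 * K * r ^ (j+2) := by
        apply hP1 (x, γ * δ) (shift^[n] x₀, (coc shift ψ n x₀ * γ₀) * δ) (j+2) (by omega)
        · show γ * δ = (coc shift ψ n x₀ * γ₀) * δ
          rw [hg2]
        · intro i hi
          have h5 : (shift^[n] x₀).1 i = x.1 i := hfa.2.1 i (by push_cast at hi ⊢; omega)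
          exact h5.symm
      have a2 : |V (x, γ) - V (shift^[n] x₀, coc shift ψ n x₀ * γ₀)|
          ≤ 2 * K * r ^ (j+2) := by
        apply hP1 (x, γ) (shift^[n] x₀, coc shift ψ n x₀ * γ₀) (j+2) (by omega)
        · show γ = coc shift ψ n x₀ * γ₀
          rw [hg2]
        · intro i hi
          have h5 : (shift^[n] x₀).1 i = x.1 i := hfa.2.1 i (by push_cast at hi ⊢; omega)
          exact h5.symm
      have hrw : V (x, γ * δ) - V (x, γ) - (V (x₀, γ₀ * δ) - V (x₀, γ₀))
          = (V (x, γ * δ) - V (shift^[n] x₀, (coc shift ψ n x₀ * γ₀) * δ))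
            - (V (x, γ) - V (shift^[n] x₀, coc shift ψ n x₀ * γ₀)) := by
        rw [← hw]; ring
      rw [hrw]
      have := abs_sub (V (x, γ * δ) - V (shift^[n] x₀, (coc shift ψ n x₀ * γ₀) * δ))
        (V (x, γ) - V (shift^[n] x₀, coc shift ψ n x₀ * γ₀))
      linarith
    have h0 : |V (x, γ * δ) - V (x, γ) - (V (x₀, γ₀ * δ) - V (x₀, γ₀))| ≤ 0 :=
      ge_of_tendsto (htend (4*K) 2) (Eventually.of_forall key)
    have h1 := abs_nonneg (V (x, γ * δ) - V (x, γ) - (V (x₀, γ₀ * δ) - V (x₀, γ₀)))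
    have heq : V (x, γ * δ) - V (x, γ) - (V (x₀, γ₀ * δ) - V (x₀, γ₀)) = 0 := by
      rw [← abs_eq_zero]; linarith
    linarith
  -- homomorphism properties
  have hα1 : V (x₀, γ₀ * 1) - V (x₀, γ₀) = 0 := by rw [mul_one, sub_self]
  have hαadd : ∀ a b : Γ, V (x₀, γ₀ * (a * b)) - V (x₀, γ₀)
      = (V (x₀, γ₀ * a) - V (x₀, γ₀)) + (V (x₀, γ₀ * b) - V (x₀, γ₀)) := by
    intro a b
    have h1 := hconst b x₀ (γ₀ * a)
    rw [mul_assoc] at h1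
    linarith
  -- the cohomological equation
  have hαinv : ∀ g : Γ, (V (x₀, γ₀ * g) - V (x₀, γ₀)) + (V (x₀, γ₀ * g⁻¹) - V (x₀, γ₀)) = 0 := by
    intro g
    have h1 := hαadd g g⁻¹
    rw [mul_inv_cancel g, mul_one] at h1
    linarith
  have hform : ∀ x : SFT A, f x = V (shift x, γ₀) - V (x, γ₀)
      + (V (x₀, γ₀ * ψ x) - V (x₀, γ₀)) := by
    intro x
    have h1 := hP2 x γ₀
    have h2 := hconst (γ₀⁻¹ * (ψ x * γ₀)) (shift x) γ₀
    conv at h2 => lhs; rw [mul_inv_cancel_left]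
    have t1 := hαadd γ₀⁻¹ (ψ x * γ₀)
    have t2 := hαadd (ψ x) γ₀
    have t3 := hαinv γ₀
    linarith
  -- Hölder continuity of u
  have hsep_rpow : ∀ x y : SFT A, x ≠ y → dSFT x y ^ θ = r ^ (sep x y) := by
    intro x y hxy
    rw [dSFT, if_neg hxy, hrdef]
    exact zpow_theta θ (sep x y)
  have hKr : ∀ x y : SFT A, x ≠ y → 1 ≤ sep x y →
      |V (x, γ₀) - V (y, γ₀)| ≤ 2 * K * r ^ (sep x y) :=
    fun x y hxy hs => hP1 (x, γ₀) (y, γ₀) (sep x y) hs rfl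
      (fun i hi => sep_spec hxy i hi)
  set R : Fin k → SFT A := fun a =>
    if h : ∃ w : SFT A, w.1 0 = a then h.choose else x₀ with hR
  have hRspec : ∀ x : SFT A, (R (x.1 0)).1 0 = x.1 0 := by
    intro x
    have hex : ∃ w : SFT A, w.1 0 = x.1 0 := ⟨x, rfl⟩
    show (if h : ∃ w : SFT A, w.1 0 = x.1 0 then h.choose else x₀).1 0 = x.1 0
    rw [dif_pos hex]
    exact hex.choose_spec
  have hxR : ∀ x : SFT A, |V (x, γ₀) - V (R (x.1 0), γ₀)| ≤ 2 * K := by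
    intro x
    have h1 : |V (x, γ₀) - V (R (x.1 0), γ₀)| ≤ 2 * K * r ^ 1 := by
      apply hP1 (x, γ₀) (R (x.1 0), γ₀) 1 le_rfl rfl
      intro i hi
      have habs := abs_lt.mp hi
      have hi0 : i = 0 := by omega
      subst hi0
      exact (hRspec x).symm
    nlinarith
  set B : ℝ := ∑ a : Fin k, ∑ b : Fin k, |V (R a, γ₀) - V (R b, γ₀)| with hB
  have hB0 : 0 ≤ B := Finset.sum_nonneg
    (fun a _ => Finset.sum_nonneg (fun b _ => abs_nonneg _))
  have hBb : ∀ a b : Fin k, |V (R a, γ₀) - V (R b, γ₀)| ≤ B := by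
    intro a b
    calc |V (R a, γ₀) - V (R b, γ₀)|
        ≤ ∑ b' : Fin k, |V (R a, γ₀) - V (R b', γ₀)| :=
          Finset.single_le_sum (f := fun b' => |V (R a, γ₀) - V (R b', γ₀)|)
            (fun c _ => abs_nonneg _) (Finset.mem_univ b)
      _ ≤ B :=
          Finset.single_le_sum
            (f := fun a' => ∑ b' : Fin k, |V (R a', γ₀) - V (R b', γ₀)|)
            (fun c _ => Finset.sum_nonneg (fun d _ => abs_nonneg _)) (Finset.mem_univ a)
  have hhol : ∀ x y : SFT A, |V (x, γ₀) - V (y, γ₀)| ≤ (4 * K + B) * dSFT x y ^ θ := by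
    intro x y
    by_cases hxy : x = y
    · subst hxy
      rw [sub_self, abs_zero, dSFT, if_pos rfl, Real.zero_rpow hθ.ne', mul_zero]
    · rcases Nat.eq_zero_or_pos (sep x y) with hs | hs
      · rw [hsep_rpow x y hxy, hs, pow_zero, mul_one]
        have t1 := hxR x
        have t2 := hxR y
        have t3 := hBb (x.1 0) (y.1 0)
        have d1 : |V (x, γ₀) - V (y, γ₀)|
            ≤ |V (x, γ₀) - V (R (x.1 0), γ₀)| + |V (R (x.1 0), γ₀) - V (R (y.1 0), γ₀)|
              + |V (R (y.1 0), γ₀) - V (y, γ₀)| := by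
          have u1 := abs_sub_le (V (x, γ₀)) (V (R (x.1 0), γ₀)) (V (y, γ₀))
          have u2 := abs_sub_le (V (R (x.1 0), γ₀)) (V (R (y.1 0), γ₀)) (V (y, γ₀))
          linarith
        have t2' : |V (R (y.1 0), γ₀) - V (y, γ₀)| ≤ 2 * K := by
          rw [abs_sub_comm]; exact t2
        linarith
      · rw [hsep_rpow x y hxy]
        have h1 := hKr x y hxy hs
        have h2 : 0 ≤ r ^ sep x y := pow_nonneg hr0.le _
        nlinarith
  refine ⟨fun x => V (x, γ₀), fun δ => V (x₀, γ₀ * δ) - V (x₀, γ₀),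
    ⟨4 * K + B, θ, by linarith, hθ, hhol⟩, ⟨hα1, hαadd⟩, hform⟩
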